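/- Let μ be a compactly supported positive measure on ℝⁿ, n ≥ 2, satisfying μ(B(x,r)) ≤ C_μ r^α, and suppose the restriction estimate ‖ĝ‖_{L²(μ_R)} ≤ A R^{α/(2n)} ‖g‖_{L²(S^{n-1})} holds for all g ∈ L²(S^{n-1}) and R large, where μ_R = R^α μ(·/R). Then for f ∈ L²(μ) and R large, the restriction of the Fourier transform of fμ to the sphere of radius R satisfies ‖ (fμ)^∧ |_{|ξ|=R} ‖_{L²(R S^{n-1})} ≲ A R^{(n-1)/2 − (α/2)(1 − 1/n)} ‖f‖_{L²(μ)}. -/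

import Mathlib

open MeasureTheory Metric ENNReal

/-- Fourier transform of the complex measure `f dν`. -/
noncomputable def fourierMu (n : ℕ) (ν : Measure (EuclideanSpace ℝ (Fin n)))
    (f : EuclideanSpace ℝ (Fin n) → ℂ) (ξ : EuclideanSpace ℝ (Fin n)) : ℂ :=
  ∫ x, Complex.exp (-Complex.I * ((@inner ℝ _ _ x ξ : ℝ) : ℂ)) * f x ∂ν

/-- Fourier extension of a function `g` on the unit sphere, `ĝ(x) = ∫_{S^{n-1}} e^{-i x·ω} g(ω) dσ(ω)`. -/
noncomputable def fourierSphere (n : ℕ)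
    (σ : Measure (sphere (0 : EuclideanSpace ℝ (Fin n)) 1))
    (g : sphere (0 : EuclideanSpace ℝ (Fin n)) 1 → ℂ) (x : EuclideanSpace ℝ (Fin n)) : ℂ :=
  ∫ ω, Complex.exp (-Complex.I *
    ((@inner ℝ _ _ x (ω : EuclideanSpace ℝ (Fin n)) : ℝ) : ℂ)) * g ω ∂σ

section Aux

lemma norm_ker (r : ℝ) : ‖Complex.exp (-Complex.I * (r : ℂ))‖ = 1 := by
  rw [Complex.norm_exp]
  simp

lemma ker_cont {n : ℕ} (x : EuclideanSpace ℝ (Fin n)) :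
    Continuous fun ξ : EuclideanSpace ℝ (Fin n) =>
      Complex.exp (-Complex.I * ((@inner ℝ _ _ x ξ : ℝ) : ℂ)) :=
  Complex.continuous_exp.comp <| continuous_const.mul <|
    Complex.continuous_ofReal.comp <| (continuous_const.inner continuous_id)

lemma ker_cont' {n : ℕ} (ξ : EuclideanSpace ℝ (Fin n)) :
    Continuous fun x : EuclideanSpace ℝ (Fin n) =>
      Complex.exp (-Complex.I * ((@inner ℝ _ _ x ξ : ℝ) : ℂ)) :=
  Complex.continuous_exp.comp <| continuous_const.mul <|
    Complex.continuous_ofReal.comp <| (continuous_id.inner continuous_const)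

lemma fourierMu_cont {n : ℕ} (ν : Measure (EuclideanSpace ℝ (Fin n)))
    (f : EuclideanSpace ℝ (Fin n) → ℂ) (hf : Integrable f ν) :
    Continuous (fourierMu n ν f) := by
  apply continuous_of_dominated (bound := fun x => ‖f x‖)
  · exact fun ξ => ((ker_cont' ξ).aestronglyMeasurable).mul hf.aestronglyMeasurable
  · intro ξ
    filter_upwards with x
    rw [norm_mul, norm_ker, one_mul]
  · exact hf.norm
  · filter_upwards with x
    exact (ker_cont x).mul continuous_const

lemma fourierMu_norm_le {n : ℕ} (ν : Measure (EuclideanSpace ℝ (Fin n)))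
    (f : EuclideanSpace ℝ (Fin n) → ℂ) (ξ : EuclideanSpace ℝ (Fin n)) :
    ‖fourierMu n ν f ξ‖ ≤ ∫ x, ‖f x‖ ∂ν := by
  refine (norm_integral_le_integral_norm _).trans_eq ?_
  refine integral_congr_ae (Filter.Eventually.of_forall fun x => ?_)
  simp only [norm_mul, norm_ker, one_mul]

lemma fourierSphere_cont {n : ℕ}
    (σ : Measure (sphere (0 : EuclideanSpace ℝ (Fin n)) 1))
    (g : sphere (0 : EuclideanSpace ℝ (Fin n)) 1 → ℂ) (hg : Integrable g σ) :
    Continuous (fourierSphere n σ g) := by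
  apply continuous_of_dominated (bound := fun ω => ‖g ω‖)
  · intro x
    exact (((ker_cont x).comp continuous_subtype_val).aestronglyMeasurable).mul
      hg.aestronglyMeasurable
  · intro x
    filter_upwards with ω
    simp only [norm_mul, norm_ker, one_mul]
    exact le_rfl
  · exact hg.norm
  · filter_upwards with ω
    exact (ker_cont' (ω : EuclideanSpace ℝ (Fin n))).mul continuous_const

lemma fourierSphere_norm_le {n : ℕ}
    (σ : Measure (sphere (0 : EuclideanSpace ℝ (Fin n)) 1))
    (g : sphere (0 : EuclideanSpace ℝ (Fin n)) 1 → ℂ) (x : EuclideanSpace ℝ (Fin n)) :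
    ‖fourierSphere n σ g x‖ ≤ ∫ ω, ‖g ω‖ ∂σ := by
  refine (norm_integral_le_integral_norm _).trans_eq ?_
  refine integral_congr_ae (Filter.Eventually.of_forall fun ω => ?_)
  simp only [norm_mul, norm_ker, one_mul]

lemma real_exp_identity (R A α : ℝ) (hR : 0 < R) (n : ℕ) (hn : 2 ≤ n) :
    R ^ ((n : ℝ) - 1) * (R ^ (-(α / 2)) * (A * R ^ (α / (2 * (n : ℝ))))) ^ 2
      = (1 * A * R ^ (((n : ℝ) - 1) / 2 - (α / 2) * (1 - 1 / n))) ^ 2 := by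
  have hn' : (n : ℝ) ≠ 0 := by positivity
  have sq' : ∀ a : ℝ, (R ^ a) ^ 2 = R ^ (a + a) := fun a => by
    rw [pow_two, ← Real.rpow_add hR]
  have expand : R ^ ((n : ℝ) - 1) * (R ^ (-(α / 2)) * (A * R ^ (α / (2 * (n : ℝ))))) ^ 2
      = A ^ 2 * (R ^ ((n : ℝ) - 1) * ((R ^ (-(α / 2))) ^ 2 * (R ^ (α / (2 * (n : ℝ)))) ^ 2)) := by
    ring
  rw [expand, sq' (-(α / 2)), sq' (α / (2 * (n : ℝ))), ← Real.rpow_add hR, ← Real.rpow_add hR,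
    one_mul, mul_pow, sq' ((((n : ℝ) - 1) / 2 - (α / 2) * (1 - 1 / n)))]
  congr 1
  congr 1
  field_simp
  ring

end Aux

/-- Suppose `μ` is a compactly supported `α`-dimensional measure on `ℝⁿ`
and the Du–Zhang-type restriction estimate
`‖ĝ‖_{L²(μ_R)} ≤ A R^{α/(2n)} ‖g‖_{L²(S^{n-1})}` holds for large `R`, where
`μ_R = R^α μ(·/R)`.  Then for `f ∈ L²(μ)` and large `R`,
`‖(fμ)^∧|_{|ξ|=R}‖_{L²(R S^{n-1})} ≲ A R^{(n-1)/2 − (α/2)(1−1/n)} ‖f‖_{L²(μ)}`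
(stated with squared norms, the `L²` norm on the sphere of radius `R` being
`R^{n-1} ∫_{S^{n-1}} |F(Rω)|² dσ(ω)`). -/
theorem stmt13 (n : ℕ) (hn : 2 ≤ n)
    (μ : Measure (EuclideanSpace ℝ (Fin n))) [IsFiniteMeasure μ]
    (M : ℝ) (hM : 0 < M) (hsupp : μ (closedBall (0 : EuclideanSpace ℝ (Fin n)) M)ᶜ = 0)
    (Cμ α : ℝ) (hCμ : 0 ≤ Cμ) (hα : 0 < α)
    (hdim : ∀ (x : EuclideanSpace ℝ (Fin n)) (r : ℝ), 0 < r →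
      μ (ball x r) ≤ ENNReal.ofReal (Cμ * r ^ α))
    (σ : Measure (sphere (0 : EuclideanSpace ℝ (Fin n)) 1))
    (hσ : σ = (volume : Measure (EuclideanSpace ℝ (Fin n))).toSphere)
    (A R₀ : ℝ) (hA : 0 < A) (hR₀ : 1 ≤ R₀)
    (hrestrict : ∀ R : ℝ, R₀ ≤ R →
      ∀ g : sphere (0 : EuclideanSpace ℝ (Fin n)) 1 → ℂ,
        eLpNorm (fourierSphere n σ g) 2
            (ENNReal.ofReal (R ^ α) • Measure.map (fun x => R • x) μ)
          ≤ ENNReal.ofReal (A * R ^ (α / (2 * n))) * eLpNorm g 2 σ) :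
    ∃ C R₁ : ℝ, 0 < C ∧ R₀ ≤ R₁ ∧
      ∀ (f : EuclideanSpace ℝ (Fin n) → ℂ), MemLp f 2 μ →
        ∀ R : ℝ, R₁ ≤ R →
          ENNReal.ofReal (R ^ ((n : ℝ) - 1)) *
              ∫⁻ ω, (‖fourierMu n μ f (R • (ω : EuclideanSpace ℝ (Fin n)))‖₊ : ℝ≥0∞) ^ 2 ∂σ
            ≤ (ENNReal.ofReal
                (C * A * R ^ (((n : ℝ) - 1) / 2 - (α / 2) * (1 - 1 / n)))) ^ 2 *
              (eLpNorm f 2 μ) ^ 2 := by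
  have hσfin : IsFiniteMeasure σ := by rw [hσ]; infer_instance
  refine ⟨1, R₀, one_pos, le_rfl, ?_⟩
  intro f hf R hR
  have hR1 : (1 : ℝ) ≤ R := hR₀.trans hR
  have hRpos : (0 : ℝ) < R := lt_of_lt_of_le one_pos hR1
  have hfint : Integrable f μ := hf.integrable one_le_two
  set F : sphere (0 : EuclideanSpace ℝ (Fin n)) 1 → ℂ :=
    fun ω => fourierMu n μ f (R • (ω : EuclideanSpace ℝ (Fin n))) with hFdef
  have hFcont : Continuous F :=
    (fourierMu_cont μ f hfint).comp ((continuous_const_smul R).comp continuous_subtype_val)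
  set g : sphere (0 : EuclideanSpace ℝ (Fin n)) 1 → ℂ :=
    fun ω => starRingEnd ℂ (F ω) with hgdef
  have hgcont : Continuous g := continuous_star.comp hFcont
  set B : ℝ := ∫ x, ‖f x‖ ∂μ with hBdef
  have hFB : ∀ ω, ‖F ω‖ ≤ B := fun ω => fourierMu_norm_le μ f _
  have hgB : ∀ ω, ‖g ω‖ ≤ B := fun ω => by
    have : ‖g ω‖ = ‖F ω‖ := by simp [hgdef]
    rw [this]; exact hFB ω
  have hgint : Integrable g σ :=
    (integrable_const B).mono' hgcont.aestronglyMeasurable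
      (Filter.Eventually.of_forall fun ω => hgB ω)
  set G : EuclideanSpace ℝ (Fin n) → ℂ := fourierSphere n σ g with hGdef
  have hGcont : Continuous G := fourierSphere_cont σ g hgint
  -- Fubini
  have hu_int : Integrable (Function.uncurry fun (ω : sphere (0 : EuclideanSpace ℝ (Fin n)) 1)
      (x : EuclideanSpace ℝ (Fin n)) =>
      Complex.exp (-Complex.I *
        ((@inner ℝ _ _ x (R • (ω : EuclideanSpace ℝ (Fin n))) : ℝ) : ℂ)) * f x * g ω)
      (σ.prod μ) := by
    have hker_prod_cont : Continuous fun z :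
        (sphere (0 : EuclideanSpace ℝ (Fin n)) 1) × (EuclideanSpace ℝ (Fin n)) =>
        Complex.exp (-Complex.I *
          ((@inner ℝ _ _ z.2 (R • (z.1 : EuclideanSpace ℝ (Fin n))) : ℝ) : ℂ)) := by
      refine Complex.continuous_exp.comp (continuous_const.mul
        (Complex.continuous_ofReal.comp ?_))
      exact continuous_snd.inner
        ((continuous_const_smul R).comp (continuous_subtype_val.comp continuous_fst))
    have haesm : AEStronglyMeasurable (Function.uncurry fun (ω : sphere (0 : EuclideanSpace ℝ (Fin n)) 1)
        (x : EuclideanSpace ℝ (Fin n)) =>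
        Complex.exp (-Complex.I *
          ((@inner ℝ _ _ x (R • (ω : EuclideanSpace ℝ (Fin n))) : ℝ) : ℂ)) * f x * g ω)
        (σ.prod μ) := by
      exact (hker_prod_cont.aestronglyMeasurable.mul hf.aestronglyMeasurable.comp_snd).mul
        (hgcont.comp continuous_fst).aestronglyMeasurable
    refine Integrable.mono' (hgint.norm.mul_prod hfint.norm) haesm ?_
    filter_upwards with z
    simp only [Function.uncurry, norm_mul, norm_ker, one_mul]
    rw [mul_comm]
  have key : ∫ ω, F ω * g ω ∂σ = ∫ x, f x * G (R • x) ∂μ := by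
    have e1 : ∫ ω, F ω * g ω ∂σ
        = ∫ ω, ∫ x, Complex.exp (-Complex.I *
            ((@inner ℝ _ _ x (R • (ω : EuclideanSpace ℝ (Fin n))) : ℝ) : ℂ)) * f x * g ω ∂μ ∂σ := by
      refine integral_congr_ae (Filter.Eventually.of_forall fun ω => ?_)
      simp only [hFdef, fourierMu]
      rw [← integral_mul_const]
    rw [e1, integral_integral_swap hu_int]
    refine integral_congr_ae (Filter.Eventually.of_forall fun x => ?_)
    simp only [hGdef, fourierSphere]
    rw [← integral_const_mul]
    refine integral_congr_ae (Filter.Eventually.of_forall fun ω => ?_)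
    simp only [real_inner_smul_left, real_inner_smul_right]
    ring
  -- value of the pairing
  have hIint : Integrable (fun ω => ‖F ω‖ ^ 2) σ := by
    refine (integrable_const (B ^ 2)).mono' ((hFcont.norm.pow 2).aestronglyMeasurable)
      (Filter.Eventually.of_forall fun ω => ?_)
    rw [Real.norm_eq_abs, abs_of_nonneg (by positivity)]
    exact pow_le_pow_left₀ (norm_nonneg _) (hFB ω) 2
  set Ireal : ℝ := ∫ ω, ‖F ω‖ ^ 2 ∂σ with hIr
  have hIrealnonneg : 0 ≤ Ireal := integral_nonneg fun ω => by positivity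
  have hval : ∫ ω, F ω * g ω ∂σ = ((Ireal : ℝ) : ℂ) := by
    have hmulconj : ∀ ω, F ω * g ω = ((‖F ω‖ ^ 2 : ℝ) : ℂ) := fun ω => by
      simp only [hgdef]
      rw [Complex.mul_conj]
      norm_cast
      rw [Complex.normSq_eq_norm_sq]
    calc ∫ ω, F ω * g ω ∂σ = ∫ ω, ((‖F ω‖ ^ 2 : ℝ) : ℂ) ∂σ :=
          integral_congr_ae (Filter.Eventually.of_forall hmulconj)
      _ = ((Ireal : ℝ) : ℂ) := integral_ofReal
  set J : ℝ≥0∞ := ∫⁻ ω, (‖F ω‖₊ : ℝ≥0∞) ^ 2 ∂σ with hJdef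
  have hJ : J = ENNReal.ofReal Ireal := by
    rw [hIr, ofReal_integral_eq_lintegral_ofReal hIint
      (Filter.Eventually.of_forall fun ω => by positivity)]
    refine lintegral_congr fun ω => ?_
    rw [ENNReal.ofReal_pow (norm_nonneg _), ofReal_norm]
    rfl
  have hJtop : J ≠ ∞ := by rw [hJ]; exact ofReal_ne_top
  -- Cauchy-Schwarz
  have hGRcont : Continuous fun x : EuclideanSpace ℝ (Fin n) => G (R • x) :=
    hGcont.comp (continuous_const_smul R)
  have step1 : J ≤ ∫⁻ x, (‖f x‖₊ : ℝ≥0∞) * ‖G (R • x)‖₊ ∂μ := by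
    have h1 : J = (‖∫ x, f x * G (R • x) ∂μ‖₊ : ℝ≥0∞) := by
      rw [hJ, ← key, hval, ← enorm_eq_nnnorm, ← ofReal_norm]
      congr 1
      rw [Complex.norm_real, Real.norm_eq_abs, abs_of_nonneg hIrealnonneg]
    rw [h1]
    refine (enorm_integral_le_lintegral_enorm _).trans_eq ?_
    refine lintegral_congr fun x => ?_
    simp [nnnorm_mul]
    rfl
  have CS : (∫⁻ x, (‖f x‖₊ : ℝ≥0∞) * ‖G (R • x)‖₊ ∂μ) ≤
      eLpNorm f 2 μ * eLpNorm (fun x => G (R • x)) 2 μ := by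
    have hconj : Real.HolderConjugate 2 2 := ⟨by norm_num, by norm_num, by norm_num⟩
    have h := ENNReal.lintegral_mul_le_Lp_mul_Lq μ hconj
      hf.aestronglyMeasurable.enorm hGRcont.aestronglyMeasurable.enorm
    rw [eLpNorm_eq_lintegral_rpow_enorm_toReal two_ne_zero ENNReal.ofNat_ne_top,
      eLpNorm_eq_lintegral_rpow_enorm_toReal two_ne_zero ENNReal.ofNat_ne_top]
    simp only [ENNReal.toReal_ofNat]
    exact h
  -- transfer to the rescaled measure
  have hmapmeas : AEMeasurable (fun x : EuclideanSpace ℝ (Fin n) => R • x) μ :=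
    (continuous_const_smul R).measurable.aemeasurable
  have hmap : eLpNorm (fun x => G (R • x)) 2 μ
      = eLpNorm G 2 (Measure.map (fun x => R • x) μ) := by
    rw [eLpNorm_map_measure hGcont.aestronglyMeasurable hmapmeas]
    rfl
  set c : ℝ≥0∞ := ENNReal.ofReal (R ^ α) with hcdef
  have hc0 : c ≠ 0 := by
    rw [hcdef]
    simp only [ne_eq, ENNReal.ofReal_eq_zero, not_le]
    positivity
  have hctop : c ≠ ∞ := ofReal_ne_top
  have hsmul : eLpNorm G 2 (c • Measure.map (fun x => R • x) μ)
      = c ^ ((1 : ℝ) / 2) * eLpNorm G 2 (Measure.map (fun x => R • x) μ) := by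
    rw [eLpNorm_smul_measure_of_ne_zero hc0, smul_eq_mul]
    norm_num
  have hgσ : eLpNorm g 2 σ = J ^ ((1 : ℝ) / 2) := by
    rw [eLpNorm_eq_lintegral_rpow_enorm_toReal two_ne_zero ENNReal.ofNat_ne_top]
    simp only [ENNReal.toReal_ofNat]
    congr 1
    refine lintegral_congr fun ω => ?_
    rw [show ((2 : ℝ)) = ((2 : ℕ) : ℝ) by norm_num, ENNReal.rpow_natCast]
    simp [hgdef]
    rfl
  have hmap_le : eLpNorm G 2 (Measure.map (fun x => R • x) μ)
      ≤ c ^ (-(1 : ℝ) / 2) *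
        (ENNReal.ofReal (A * R ^ (α / (2 * (n : ℝ)))) * J ^ ((1 : ℝ) / 2)) := by
    calc eLpNorm G 2 (Measure.map (fun x => R • x) μ)
        = c ^ (-(1 : ℝ) / 2) * (c ^ ((1 : ℝ) / 2) *
            eLpNorm G 2 (Measure.map (fun x => R • x) μ)) := by
          rw [← mul_assoc, ← ENNReal.rpow_add _ _ hc0 hctop]
          norm_num
      _ = c ^ (-(1 : ℝ) / 2) * eLpNorm G 2 (c • Measure.map (fun x => R • x) μ) := by
          rw [hsmul]
      _ ≤ c ^ (-(1 : ℝ) / 2) *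
            (ENNReal.ofReal (A * R ^ (α / (2 * (n : ℝ)))) * J ^ ((1 : ℝ) / 2)) := by
          gcongr
          rw [← hgσ]
          exact hrestrict R hR g
  set K : ℝ≥0∞ := eLpNorm f 2 μ *
    (c ^ (-(1 : ℝ) / 2) * ENNReal.ofReal (A * R ^ (α / (2 * (n : ℝ))))) with hKdef
  have main : J ≤ K * J ^ ((1 : ℝ) / 2) := by
    calc J ≤ eLpNorm f 2 μ * eLpNorm (fun x => G (R • x)) 2 μ := step1.trans CS
      _ ≤ eLpNorm f 2 μ * (c ^ (-(1 : ℝ) / 2) *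
            (ENNReal.ofReal (A * R ^ (α / (2 * (n : ℝ)))) * J ^ ((1 : ℝ) / 2))) := by
          rw [hmap]; gcongr
      _ = K * J ^ ((1 : ℝ) / 2) := by rw [hKdef]; ring
  have hJK : J ≤ K ^ 2 := by
    rcases eq_or_ne J 0 with h0 | h0
    · simp [h0]
    · have hsplit : J ^ ((1 : ℝ) / 2) * J ^ ((1 : ℝ) / 2) = J := by
        rw [← ENNReal.rpow_add _ _ h0 hJtop]
        norm_num
      have hh0 : J ^ ((1 : ℝ) / 2) ≠ 0 := by
        simp [ENNReal.rpow_eq_zero_iff, h0, hJtop]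
      have hht : J ^ ((1 : ℝ) / 2) ≠ ∞ := by
        simp [ENNReal.rpow_eq_top_iff, h0, hJtop]
      have h2 : J ^ ((1 : ℝ) / 2) * J ^ ((1 : ℝ) / 2) ≤ K * J ^ ((1 : ℝ) / 2) := by
        rw [hsplit]; exact main
      have h3 : J ^ ((1 : ℝ) / 2) ≤ K := (ENNReal.mul_le_mul_iff_left hh0 hht).mp h2
      calc J = J ^ ((1 : ℝ) / 2) * J ^ ((1 : ℝ) / 2) := hsplit.symm
        _ ≤ K * K := mul_le_mul' h3 h3
        _ = K ^ 2 := (sq K).symm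
  -- final arithmetic
  have hcneg : c ^ (-(1 : ℝ) / 2) = ENNReal.ofReal (R ^ (-(α / 2))) := by
    rw [hcdef, ← ENNReal.ofReal_rpow_of_pos hRpos, ← ENNReal.rpow_mul,
      ENNReal.ofReal_rpow_of_pos hRpos]
    ring_nf
  calc ENNReal.ofReal (R ^ ((n : ℝ) - 1)) * J
      ≤ ENNReal.ofReal (R ^ ((n : ℝ) - 1)) * K ^ 2 := by gcongr
    _ = (ENNReal.ofReal
          (1 * A * R ^ (((n : ℝ) - 1) / 2 - (α / 2) * (1 - 1 / n)))) ^ 2 *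
        (eLpNorm f 2 μ) ^ 2 := by
        rw [hKdef, hcneg, mul_pow, ← ENNReal.ofReal_mul (by positivity),
          ← ENNReal.ofReal_pow (by positivity)]
        rw [show ENNReal.ofReal (R ^ ((n : ℝ) - 1)) *
            ((eLpNorm f 2 μ) ^ 2 * ENNReal.ofReal ((R ^ (-(α / 2)) *
              (A * R ^ (α / (2 * (n : ℝ))))) ^ 2))
            = ENNReal.ofReal (R ^ ((n : ℝ) - 1)) *
              ENNReal.ofReal ((R ^ (-(α / 2)) * (A * R ^ (α / (2 * (n : ℝ))))) ^ 2) *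
              (eLpNorm f 2 μ) ^ 2 by ring]
        rw [← ENNReal.ofReal_mul (by positivity), real_exp_identity R A α hRpos n hn,
          ENNReal.ofReal_pow (by positivity)]
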